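/- Let G = ({1,...,n}, E) be a connected undirected graph with n ≥ 2 in which every node is its own neighbor, let d(i) denote the number of neighbors of node i other than i itself, and let d_max = max_i d(i). Define A by a_ij = 1/(2 d_max) for j ∈ N(i), j ≠ i, a_ii = 1 − d(i)/(2 d_max), and a_ij = 0 otherwise. If x(t+1) = A x(t) and E(t) = ||x(t) − x̄ 1||₂², then for every t ≥ 0, E(t) ≤ (1 − 1/(4 n² d_max))^t · E(0). -/

import Mathlib

open Finset

lemma list_sq_sum (l : List ℝ) : l.sum ^ 2 ≤ l.length * (l.map (· ^ 2)).sum := by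
  induction l with
  | nil => simp
  | cons a l ih =>
    rcases Nat.eq_zero_or_pos l.length with h0 | h0
    · rw [List.length_eq_zero_iff] at h0; subst h0; simp
    simp only [List.sum_cons, List.length_cons, List.map_cons, Nat.cast_add, Nat.cast_one]
    have hT : (0:ℝ) ≤ (l.map (· ^ 2)).sum := by
      apply List.sum_nonneg; intro x hx
      obtain ⟨y, _, rfl⟩ := List.mem_map.1 hx
      positivity
    have hL : (0:ℝ) < (l.length : ℝ) := by exact_mod_cast h0
    nlinarith [sq_nonneg ((l.length : ℝ) * a - l.sum), ih,
      mul_le_mul_of_nonneg_left ih (le_of_lt hL)]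

lemma walk_telescope {V : Type*} {G : SimpleGraph V} (y : V → ℝ) :
    ∀ {u v : V} (w : G.Walk u v),
      (w.darts.map fun d => y d.toProd.1 - y d.toProd.2).sum = y u - y v := by
  intro u v w
  induction w with
  | nil => simp
  | cons h q ih =>
    rw [SimpleGraph.Walk.darts_cons, List.map_cons, List.sum_cons, ih]
    ring

lemma exists_neighbor {n : ℕ} (hn : 2 ≤ n) (E : Fin n → Fin n → Prop)
    (hE_conn : ∀ i j, Relation.ReflTransGen E i j) (i : Fin n) :
    ∃ k, k ≠ i ∧ E i k := by
  haveI : Nontrivial (Fin n) := Fin.nontrivial_iff_two_le.mpr hn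
  obtain ⟨j, hj⟩ := exists_ne i
  have key : ∀ v, Relation.ReflTransGen E i v → v ≠ i → ∃ k, k ≠ i ∧ E i k := by
    intro v hv
    induction hv with
    | refl => intro h; exact absurd rfl h
    | @tail b c hab hbc ih =>
      intro hc
      by_cases hb : b = i
      · subst hb; exact ⟨c, hc, hbc⟩
      · exact ih hb
  exact key j (hE_conn i j) hj

open Classical in
lemma step_contraction
    (n : ℕ) (hn : 2 ≤ n)
    (E : Fin n → Fin n → Prop)
    (hE_symm : ∀ i j, E i j → E j i)
    (hE_conn : ∀ i j, Relation.ReflTransGen E i j)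
    (d : Fin n → ℕ)
    (hd : ∀ i, d i = (Finset.univ.filter fun j => j ≠ i ∧ E i j).card)
    (dmax : ℕ) (hdmax : dmax = Finset.univ.sup d)
    (A : Matrix (Fin n) (Fin n) ℝ)
    (hA : ∀ i j, A i j =
      if j = i then 1 - (d i : ℝ) / (2 * (dmax : ℝ))
      else if E i j then 1 / (2 * (dmax : ℝ)) else 0)
    (y : Fin n → ℝ) (hy : ∑ i, y i = 0) :
    ∑ i, (A.mulVec y i) ^ 2 ≤ (1 - 1 / (4 * (n:ℝ)^2 * (dmax:ℝ))) * ∑ i, y i ^ 2 := by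
  have hn0 : 0 < n := by omega
  set N : Fin n → Finset (Fin n) := fun i => Finset.univ.filter fun j => j ≠ i ∧ E i j with hN
  have hcard : ∀ i, (N i).card = d i := fun i => (hd i).symm
  have hdmax1 : 1 ≤ dmax := by
    obtain ⟨k, hk, hEk⟩ := exists_neighbor hn E hE_conn ⟨0, hn0⟩
    have h1 : 1 ≤ d ⟨0, hn0⟩ := by
      rw [hd]
      exact Finset.card_pos.mpr ⟨k, by simp [hk, hEk]⟩
    exact le_trans h1 (hdmax ▸ Finset.le_sup (Finset.mem_univ _))
  set D : ℝ := (dmax : ℝ) with hD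
  have hD1 : (1:ℝ) ≤ D := by rw [hD]; exact_mod_cast hdmax1
  have hDpos : (0:ℝ) < D := by linarith
  set ε : ℝ := 1 / (2 * D) with hε
  have hεpos : 0 < ε := by positivity
  set Lv : Fin n → ℝ := fun i => ∑ j ∈ N i, (y i - y j) with hLv
  -- mulVec formula
  have hmul : ∀ i, A.mulVec y i = y i - ε * Lv i := by
    intro i
    have h0 : A.mulVec y i = ∑ j, A i j * y j := rfl
    have hterm : ∀ j, A i j * y j =
        (if j = i then (1 - (d i : ℝ) * ε) * y i else 0)
          + (if j ∈ N i then ε * y j else 0) := by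
      intro j
      rw [hA]
      by_cases hj : j = i
      · subst hj
        have : j ∉ N j := by simp [hN]
        simp only [if_pos rfl, eq_self_iff_true, if_true, if_neg this, add_zero, hε]
        field_simp
      · by_cases hEj : E i j
        · have : j ∈ N i := by simp [hN, hj, hEj]
          simp only [if_neg hj, if_pos hEj, if_pos this, zero_add, hε]
        · have : j ∉ N i := by simp [hN, hEj]
          simp [hj, hEj, this]
    rw [h0, Finset.sum_congr rfl fun j _ => hterm j, Finset.sum_add_distrib,
      Finset.sum_ite_eq' Finset.univ i, Finset.sum_ite_mem, Finset.univ_inter]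
    have hLsum : Lv i = (d i : ℝ) * y i - ∑ j ∈ N i, y j := by
      simp only [hLv, Finset.sum_sub_distrib, Finset.sum_const, hcard, nsmul_eq_mul]
    rw [if_pos (Finset.mem_univ i), ← Finset.mul_sum, hLsum]
    ring
  set Y := ∑ i, y i ^ 2 with hY
  set Q := ∑ i, y i * Lv i with hQ
  set R := ∑ i, Lv i ^ 2 with hR
  set S := ∑ i, ∑ j ∈ N i, (y i - y j) ^ 2 with hS
  have hexp : ∑ i, (A.mulVec y i) ^ 2 = Y - 2*ε*Q + ε^2*R := by
    calc ∑ i, (A.mulVec y i) ^ 2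
        = ∑ i, (y i ^ 2 - 2*ε*(y i * Lv i) + ε^2 * Lv i ^ 2) :=
          Finset.sum_congr rfl fun i _ => by rw [hmul i]; ring
      _ = Y - 2*ε*Q + ε^2*R := by
          rw [Finset.sum_add_distrib, Finset.sum_sub_distrib, ← Finset.mul_sum, ← Finset.mul_sum]
  -- swap lemma
  have hswap : ∀ g : Fin n → Fin n → ℝ, ∑ i, ∑ j ∈ N i, g i j = ∑ i, ∑ j ∈ N i, g j i := by
    intro g
    have h1 : ∀ (h : Fin n → Fin n → ℝ) i, ∑ j ∈ N i, h i j
        = ∑ j, if j ≠ i ∧ E i j then h i j else 0 := by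
      intro h i; rw [hN, Finset.sum_filter]
    simp only [h1 g, h1 (fun i j => g j i)]
    rw [Finset.sum_comm]
    apply Finset.sum_congr rfl; intro a _
    apply Finset.sum_congr rfl; intro b _
    apply if_congr _ rfl rfl
    constructor
    · rintro ⟨h, h'⟩; exact ⟨Ne.symm h, hE_symm _ _ h'⟩
    · rintro ⟨h, h'⟩; exact ⟨Ne.symm h, hE_symm _ _ h'⟩
  have hQS : S = 2 * Q := by
    have e1 : S = (∑ i, ∑ j ∈ N i, (y i * (y i - y j)))
        - ∑ i, ∑ j ∈ N i, (y j * (y i - y j)) := by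
      rw [← Finset.sum_sub_distrib]
      apply Finset.sum_congr rfl; intro i _
      rw [← Finset.sum_sub_distrib]
      apply Finset.sum_congr rfl; intro j _
      ring
    have e2 : ∑ i, ∑ j ∈ N i, (y i * (y i - y j)) = Q := by
      apply Finset.sum_congr rfl; intro i _
      rw [← Finset.mul_sum]
    have e3 : ∑ i, ∑ j ∈ N i, (y j * (y i - y j)) = -Q := by
      rw [hswap (fun i j => y j * (y i - y j))]
      have : ∀ i, ∑ j ∈ N i, y i * (y j - y i) = -(y i * Lv i) := by
        intro i
        rw [← Finset.mul_sum]
        have hni : ∑ j ∈ N i, (y j - y i) = -Lv i := by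
          simp only [hLv]
          rw [← Finset.sum_neg_distrib]
          apply Finset.sum_congr rfl; intros; ring
        rw [hni]; ring
      rw [Finset.sum_congr rfl fun i _ => this i, Finset.sum_neg_distrib]
    rw [e1, e2, e3]; ring
  -- norm bound on Lv
  have hRS : R ≤ D * S := by
    have hRi : ∀ i, Lv i ^ 2 ≤ D * ∑ j ∈ N i, (y i - y j) ^ 2 := by
      intro i
      have h1 : (∑ j ∈ N i, (y i - y j)) ^ 2
          ≤ ((N i).card : ℝ) * ∑ j ∈ N i, (y i - y j) ^ 2 := sq_sum_le_card_mul_sum_sq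
      have hdle : ((N i).card : ℝ) ≤ D := by
        rw [hD]
        exact_mod_cast (hcard i) ▸ (hdmax ▸ Finset.le_sup (Finset.mem_univ i) : d i ≤ dmax)
      have hinn : 0 ≤ ∑ j ∈ N i, (y i - y j) ^ 2 :=
        Finset.sum_nonneg fun j _ => sq_nonneg _
      exact le_trans h1 (mul_le_mul_of_nonneg_right hdle hinn)
    calc R ≤ ∑ i, D * ∑ j ∈ N i, (y i - y j) ^ 2 := Finset.sum_le_sum fun i _ => hRi i
      _ = D * S := by rw [← Finset.mul_sum]
  -- Poincaré inequality
  have hSnn : 0 ≤ S := Finset.sum_nonneg fun i _ => Finset.sum_nonneg fun j _ => sq_nonneg _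
  have hYnn : 0 ≤ Y := Finset.sum_nonneg fun i _ => sq_nonneg _
  obtain ⟨a, -, ha⟩ := Finset.exists_max_image Finset.univ y ⟨⟨0, hn0⟩, Finset.mem_univ _⟩
  obtain ⟨b, -, hb⟩ := Finset.exists_min_image Finset.univ y ⟨⟨0, hn0⟩, Finset.mem_univ _⟩
  have hsum_le : ∀ c : Fin n, (∀ i, y i ≤ y c) → 0 ≤ (n:ℝ) * y c := by
    intro c hc
    have : (0:ℝ) = ∑ i, y i := hy.symm
    rw [this]
    calc ∑ i, y i ≤ ∑ _i : Fin n, y c := Finset.sum_le_sum fun i _ => hc i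
      _ = (n:ℝ) * y c := by rw [Finset.sum_const, Finset.card_univ, Fintype.card_fin, nsmul_eq_mul]
  have hya : 0 ≤ y a := by
    have := hsum_le a fun i => ha i (Finset.mem_univ i)
    have hnr : (0:ℝ) < (n:ℝ) := by exact_mod_cast hn0
    nlinarith
  have hyb : y b ≤ 0 := by
    have h2 : (n:ℝ) * y b ≤ 0 := by
      have : ∑ _i : Fin n, y b ≤ ∑ i, y i := Finset.sum_le_sum fun i _ => hb i (Finset.mem_univ i)
      rw [hy, Finset.sum_const, Finset.card_univ, Fintype.card_fin, nsmul_eq_mul] at this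
      exact this
    have hnr : (0:ℝ) < (n:ℝ) := by exact_mod_cast hn0
    nlinarith
  have hbd : ∀ i, y i ^ 2 ≤ (y a - y b) ^ 2 := by
    intro i
    apply sq_le_sq'
    · have := hb i (Finset.mem_univ i); linarith
    · have := ha i (Finset.mem_univ i); linarith
  have hYn : Y ≤ (n:ℝ) * (y a - y b) ^ 2 := by
    calc Y ≤ ∑ _i : Fin n, (y a - y b) ^ 2 := Finset.sum_le_sum fun i _ => hbd i
      _ = (n:ℝ) * (y a - y b) ^ 2 := by
          rw [Finset.sum_const, Finset.card_univ, Fintype.card_fin, nsmul_eq_mul]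
  -- graph and path
  let G' : SimpleGraph (Fin n) :=
    { Adj := fun i j => i ≠ j ∧ E i j,
      symm := ⟨fun i j h => ⟨h.1.symm, hE_symm _ _ h.2⟩⟩,
      loopless := ⟨fun i h => h.1 rfl⟩ }
  have hreach : G'.Reachable a b := by
    rw [SimpleGraph.reachable_iff_reflTransGen]
    have key : ∀ u v : Fin n, Relation.ReflTransGen E u v → Relation.ReflTransGen G'.Adj u v := by
      intro u v h
      induction h with
      | refl => exact Relation.ReflTransGen.refl
      | @tail p q hp hq ih =>
        by_cases hpq : p = q
        · subst hpq; exact ih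
        · exact ih.tail ⟨hpq, hq⟩
    exact key a b (hE_conn a b)
  obtain ⟨w⟩ := hreach
  set pw : G'.Walk a b := (w.toPath : G'.Path a b).1 with hpw
  have hpath : pw.IsPath := (w.toPath : G'.Path a b).2
  have hlen : pw.length < n := by
    have := hpath.length_lt
    simpa using this
  set dl := pw.darts with hdl
  have htel : (dl.map fun dd => y dd.toProd.1 - y dd.toProd.2).sum = y a - y b :=
    walk_telescope y pw
  have hCS : (y a - y b) ^ 2
      ≤ (pw.length : ℝ) * ((dl.map fun dd => y dd.toProd.1 - y dd.toProd.2).map (· ^ 2)).sum := by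
    have h1 := list_sq_sum (dl.map fun dd => y dd.toProd.1 - y dd.toProd.2)
    rw [htel] at h1
    simpa [hdl, SimpleGraph.Walk.length_darts] using h1
  have hmapmap : ((dl.map fun dd => y dd.toProd.1 - y dd.toProd.2).map (· ^ 2)).sum
      = (dl.map fun dd => (y dd.toProd.1 - y dd.toProd.2) ^ 2).sum := by
    rw [List.map_map]; rfl
  have hnodup : dl.Nodup :=
    SimpleGraph.Walk.darts_nodup_of_support_nodup hpath.support_nodup
  have hsum_fin : (dl.map fun dd => (y dd.toProd.1 - y dd.toProd.2) ^ 2).sum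
      = ∑ dd ∈ dl.toFinset, (y dd.toProd.1 - y dd.toProd.2) ^ 2 :=
    (List.sum_toFinset _ hnodup).symm
  have hsub : ∑ dd ∈ dl.toFinset, (y dd.toProd.1 - y dd.toProd.2) ^ 2 ≤ S := by
    have hSsig : S = ∑ x ∈ Finset.univ.sigma N, (y x.1 - y x.2) ^ 2 := by
      rw [Finset.sum_sigma]
    rw [hSsig]
    have himg : ∑ dd ∈ dl.toFinset, (y dd.toProd.1 - y dd.toProd.2) ^ 2
        = ∑ x ∈ dl.toFinset.image
            (fun dd => (⟨dd.toProd.1, dd.toProd.2⟩ : (_ : Fin n) × Fin n)),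
            (y x.1 - y x.2) ^ 2 := by
      rw [Finset.sum_image]
      intro d1 _ d2 _ hh
      have h1 : d1.toProd.1 = d2.toProd.1 := congrArg Sigma.fst hh
      have h2 : d1.toProd.2 = d2.toProd.2 := by
        have := congrArg Sigma.snd hh
        exact this
      exact SimpleGraph.Dart.toProd_injective (Prod.ext h1 h2)
    rw [himg]
    apply Finset.sum_le_sum_of_subset_of_nonneg
    · intro x hx
      obtain ⟨dd, _, rfl⟩ := Finset.mem_image.1 hx
      have hadj := dd.adj
      simp only [Finset.mem_sigma, Finset.mem_univ, true_and, hN, Finset.mem_filter]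
      exact ⟨Ne.symm hadj.1, hadj.2⟩
    · intros; positivity
  have hYS : Y ≤ (n:ℝ) ^ 2 * S := by
    have hTnn : 0 ≤ (dl.map fun dd => (y dd.toProd.1 - y dd.toProd.2) ^ 2).sum := by
      rw [hsum_fin]; exact Finset.sum_nonneg fun _ _ => sq_nonneg _
    have hlen' : (pw.length : ℝ) ≤ (n:ℝ) := by exact_mod_cast hlen.le
    have h1 : (y a - y b) ^ 2 ≤ (n:ℝ) * S := by
      calc (y a - y b) ^ 2
          ≤ (pw.length : ℝ) * ((dl.map fun dd => y dd.toProd.1 - y dd.toProd.2).map (· ^ 2)).sum := hCS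
        _ = (pw.length : ℝ) * (dl.map fun dd => (y dd.toProd.1 - y dd.toProd.2) ^ 2).sum := by
            rw [hmapmap]
        _ ≤ (n:ℝ) * S := by
            apply mul_le_mul hlen' _ hTnn (by positivity)
            rw [hsum_fin]; exact hsub
    calc Y ≤ (n:ℝ) * (y a - y b) ^ 2 := hYn
      _ ≤ (n:ℝ) * ((n:ℝ) * S) := by
          apply mul_le_mul_of_nonneg_left h1 (by positivity)
      _ = (n:ℝ) ^ 2 * S := by ring
  -- final assembly
  have hε2D : ε * (2 * D) = 1 := by
    rw [hε]; field_simp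
  have h2 : ε ^ 2 * (D * S) = ε * Q := by
    rw [hQS]; linear_combination (ε * Q) * hε2D
  have h1 : ε ^ 2 * R ≤ ε ^ 2 * (D * S) := mul_le_mul_of_nonneg_left hRS (sq_nonneg ε)
  have h3 : 1 / (4 * (n:ℝ) ^ 2 * D) * Y ≤ ε * Q := by
    have hQY : Y ≤ (n:ℝ) ^ 2 * (2 * Q) := by rw [← hQS]; exact hYS
    have hnr : (0:ℝ) < (n:ℝ) := by exact_mod_cast hn0
    have key : ε * Q - 1 / (4 * (n:ℝ) ^ 2 * D) * Y
        = ((n:ℝ) ^ 2 * (2 * Q) - Y) / (4 * (n:ℝ) ^ 2 * D) := by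
      rw [hε]; field_simp; ring
    have hnn : 0 ≤ ((n:ℝ) ^ 2 * (2 * Q) - Y) / (4 * (n:ℝ) ^ 2 * D) :=
      div_nonneg (by linarith) (by positivity)
    linarith [key ▸ hnn]
  rw [hexp]
  calc Y - 2*ε*Q + ε^2*R ≤ Y - 2*ε*Q + ε*Q := by linarith
    _ = Y - ε*Q := by ring
    _ ≤ Y - 1 / (4 * (n:ℝ) ^ 2 * D) * Y := by linarith
    _ = (1 - 1 / (4 * (n:ℝ) ^ 2 * D)) * Y := by ring
open Classical in
/-- For the weight matrix with `ε = 1/(2 d_max)`, the squared error of the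
consensus iteration contracts as `E(t) ≤ (1 - 1/(4 n² d_max))ᵗ E(0)`. -/
theorem equal_weight_consensus_contraction
    (n : ℕ) (hn : 2 ≤ n)
    (E : Fin n → Fin n → Prop)
    (hE_symm : ∀ i j, E i j → E j i)
    (hE_refl : ∀ i, E i i)
    (hE_conn : ∀ i j, Relation.ReflTransGen E i j)
    (d : Fin n → ℕ)
    (hd : ∀ i, d i = (Finset.univ.filter fun j => j ≠ i ∧ E i j).card)
    (dmax : ℕ) (hdmax : dmax = Finset.univ.sup d)
    (A : Matrix (Fin n) (Fin n) ℝ)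
    (hA : ∀ i j, A i j =
      if j = i then 1 - (d i : ℝ) / (2 * (dmax : ℝ))
      else if E i j then 1 / (2 * (dmax : ℝ)) else 0)
    (x : ℕ → Fin n → ℝ)
    (hx : ∀ t, x (t + 1) = A.mulVec (x t))
    (xbar : ℝ) (hxbar : xbar = (∑ j, x 0 j) / n)
    (Esq : ℕ → ℝ) (hEsq : ∀ t, Esq t = ∑ i, (x t i - xbar) ^ 2) :
    ∀ t : ℕ, Esq t ≤ (1 - 1 / (4 * (n : ℝ) ^ 2 * (dmax : ℝ))) ^ t * Esq 0 := by
  have hn0 : 0 < n := by omega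
  have hnr : (0:ℝ) < (n:ℝ) := by exact_mod_cast hn0
  have hn2 : (2:ℝ) ≤ (n:ℝ) := by exact_mod_cast hn
  have hdmax1 : 1 ≤ dmax := by
    obtain ⟨k, hk, hEk⟩ := exists_neighbor hn E hE_conn ⟨0, hn0⟩
    have h1 : 1 ≤ d ⟨0, hn0⟩ := by
      rw [hd]
      exact Finset.card_pos.mpr ⟨k, by simp [hk, hEk]⟩
    exact le_trans h1 (hdmax ▸ Finset.le_sup (Finset.mem_univ _))
  have hDpos : (0:ℝ) < (dmax:ℝ) := by exact_mod_cast hdmax1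
  have hD1 : (1:ℝ) ≤ (dmax:ℝ) := by exact_mod_cast hdmax1
  set N : Fin n → Finset (Fin n) := fun i => Finset.univ.filter fun j => j ≠ i ∧ E i j with hN
  have hrow : ∀ i, ∑ j, A i j = 1 := by
    intro i
    have hterm : ∀ j, A i j =
        (if j = i then 1 - (d i : ℝ) / (2 * (dmax:ℝ)) else 0)
          + (if j ∈ N i then 1 / (2 * (dmax:ℝ)) else 0) := by
      intro j; rw [hA]; by_cases hj : j = i
      · subst hj; simp [hN]
      · by_cases hEj : E i j <;> simp [hN, hj, hEj]
    rw [Finset.sum_congr rfl fun j _ => hterm j, Finset.sum_add_distrib,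
      Finset.sum_ite_eq' Finset.univ i, Finset.sum_ite_mem, Finset.univ_inter,
      if_pos (Finset.mem_univ i), Finset.sum_const, nsmul_eq_mul]
    have hcd : ((N i).card : ℝ) = (d i : ℝ) := by exact_mod_cast (hd i).symm
    rw [hcd]
    field_simp
    ring
  have hsymmA : ∀ i j, A i j = A j i := by
    intro i j
    by_cases hj : j = i
    · subst hj; rfl
    · rw [hA, hA, if_neg hj, if_neg (Ne.symm hj)]
      by_cases hEj : E i j
      · rw [if_pos hEj, if_pos (hE_symm _ _ hEj)]
      · rw [if_neg hEj, if_neg fun h => hEj (hE_symm _ _ h)]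
  have hcol : ∀ j, ∑ i, A i j = 1 := by
    intro j
    rw [Finset.sum_congr rfl fun i _ => hsymmA i j]
    exact hrow j
  have hsum_pres : ∀ t, ∑ i, x t i = ∑ i, x 0 i := by
    intro t; induction t with
    | zero => rfl
    | succ t ih =>
      rw [hx t]
      calc ∑ i, A.mulVec (x t) i = ∑ i, ∑ j, A i j * x t j := rfl
        _ = ∑ j, ∑ i, A i j * x t j := Finset.sum_comm
        _ = ∑ j, x t j := by
            apply Finset.sum_congr rfl; intro j _
            rw [← Finset.sum_mul, hcol j, one_mul]
        _ = ∑ i, x 0 i := ih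
  set y : ℕ → Fin n → ℝ := fun t i => x t i - xbar with hyd
  have hy0 : ∀ t, ∑ i, y t i = 0 := by
    intro t
    simp only [hyd]
    rw [Finset.sum_sub_distrib, hsum_pres t, Finset.sum_const, Finset.card_univ,
      Fintype.card_fin, nsmul_eq_mul, hxbar]
    field_simp
    ring
  have hyrec : ∀ t, y (t+1) = A.mulVec (y t) := by
    intro t
    funext i
    have h2 : A.mulVec (y t) i = A.mulVec (x t) i - xbar := by
      simp only [Matrix.mulVec, dotProduct, hyd]
      have hterm : ∀ j, A i j * (x t j - xbar) = A i j * x t j - xbar * A i j := by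
        intro j; ring
      rw [Finset.sum_congr rfl fun j _ => hterm j, Finset.sum_sub_distrib,
        ← Finset.mul_sum, hrow i, mul_one]
    simp only [hyd]
    rw [hx t, h2]
  have hEy : ∀ t, Esq t = ∑ i, (y t i) ^ 2 := by
    intro t; rw [hEsq t]
  have hc0 : 0 ≤ 1 - 1 / (4 * (n:ℝ) ^ 2 * (dmax:ℝ)) := by
    have h16 : (1:ℝ) ≤ 4 * (n:ℝ) ^ 2 * (dmax:ℝ) := by nlinarith
    have h17 : 1 / (4 * (n:ℝ) ^ 2 * (dmax:ℝ)) ≤ 1 := by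
      rw [div_le_one (by positivity)]; exact h16
    linarith
  intro t
  induction t with
  | zero => simp
  | succ t ih =>
    have hstep := step_contraction n hn E hE_symm hE_conn d hd dmax hdmax A hA (y t) (hy0 t)
    calc Esq (t+1) = ∑ i, (y (t+1) i) ^ 2 := hEy _
      _ = ∑ i, (A.mulVec (y t) i) ^ 2 := by rw [hyrec t]
      _ ≤ (1 - 1 / (4 * (n:ℝ) ^ 2 * (dmax:ℝ))) * ∑ i, (y t i) ^ 2 := hstep
      _ = (1 - 1 / (4 * (n:ℝ) ^ 2 * (dmax:ℝ))) * Esq t := by rw [← hEy]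
      _ ≤ (1 - 1 / (4 * (n:ℝ) ^ 2 * (dmax:ℝ)))
            * ((1 - 1 / (4 * (n:ℝ) ^ 2 * (dmax:ℝ))) ^ t * Esq 0) :=
          mul_le_mul_of_nonneg_left ih hc0
      _ = (1 - 1 / (4 * (n:ℝ) ^ 2 * (dmax:ℝ))) ^ (t+1) * Esq 0 := by ring
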